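/- Let T > 0 and let w : ℕ₀^m → (ℝ → ℝ) be a family of differentiable, nonnegative functions on (0,T) solving the reduced multicomponent Smoluchowski equation, with ∑_{n} |n| w_n(t) < ∞ for each t. For t ∈ (0,T) and x ∈ (0,∞)^m set U(t,x) = ∑_{n∈ℕ₀^m} w_n(t) e^{−n·x}. Assume termwise differentiation is valid, i.e. ∂U/∂t (t,x) = ∑_n (d/dt w_n(t)) e^{−n·x} and ∇U(t,x) = −∑_n n w_n(t) e^{−n·x}, both series converging absolutely. Then U satisfies ∂U/∂t (t,x) = ½ (∇U(t,x))ᵀ A (∇U(t,x)) + (∇U(t,x))ᵀ A m(0) for all (t,x) ∈ (0,T) × (0,∞)^m. -/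

import Mathlib

/-- Cauchy-product / convolution identity for absolutely summable families indexed by
`Fin m → ℕ`, with the convolution written as a sum over `Finset.Iic n`. -/
lemma gf_conv_aux {m : ℕ} (f g : (Fin m → ℕ) → ℝ)
    (hf : Summable fun n => |f n|) (hg : Summable fun n => |g n|) :
    Summable (fun n : Fin m → ℕ => ∑ k ∈ Finset.Iic n, f k * g (n - k)) ∧
      ∑' n : Fin m → ℕ, ∑ k ∈ Finset.Iic n, f k * g (n - k) = (∑' n, f n) * (∑' n, g n) := by
  letI : Finset.HasAntidiagonal (Fin m → ℕ) := Finset.HasAntidiagonal.antidiagonalOfLocallyFinite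
  have hiic : ∀ n : Fin m → ℕ,
      ∑ kl ∈ Finset.HasAntidiagonal.antidiagonal n, f kl.1 * g kl.2 = ∑ k ∈ Finset.Iic n, f k * g (n - k) := by
    intro n
    refine Finset.sum_nbij' Prod.fst (fun k => (k, n - k)) ?_ ?_ ?_ ?_ ?_
    · intro a ha
      rw [Finset.HasAntidiagonal.mem_antidiagonal] at ha
      rw [Finset.mem_Iic]
      exact ha ▸ le_self_add
    · intro k hk
      rw [Finset.mem_Iic] at hk
      rw [Finset.HasAntidiagonal.mem_antidiagonal]
      exact add_tsub_cancel_of_le hk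
    · intro a ha
      rw [Finset.HasAntidiagonal.mem_antidiagonal] at ha
      ext <;> simp [← ha]
    · intro k _
      rfl
    · intro a ha
      rw [Finset.HasAntidiagonal.mem_antidiagonal] at ha
      rw [show n - a.1 = a.2 by rw [← ha, add_tsub_cancel_left]]
  have hmul : Summable fun x : (Fin m → ℕ) × (Fin m → ℕ) => f x.1 * g x.2 :=
    summable_mul_of_summable_norm (by simpa [Real.norm_eq_abs] using hf)
      (by simpa [Real.norm_eq_abs] using hg)
  constructor
  · simpa only [hiic] using summable_sum_mul_antidiagonal_of_summable_mul hmul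
  · simp_rw [← hiic]
    exact (Summable.tsum_mul_tsum_eq_tsum_sum_antidiagonal hf.of_abs hg.of_abs hmul).symm

/-- Purely algebraic reorganization of the Hamilton–Jacobi right-hand side. -/
lemma gf_final_alg {m : ℕ} (A : Matrix (Fin m) (Fin m) ℝ) (m₀ S : Fin m → ℝ) :
    (1/2 : ℝ) * ∑ j, ∑ k, (-S j) * A j k * (-S k) + ∑ j, ∑ k, (-S j) * A j k * m₀ k
      = (1/2) * ∑ p : Fin m × Fin m, A p.1 p.2 * (S p.1 * S p.2)
        - ∑ i, (∑ j, A i j * m₀ j) * S i := by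
  rw [Fintype.sum_prod_type, sub_eq_add_neg]
  congr 1
  · congr 1
    exact Finset.sum_congr rfl fun j _ => Finset.sum_congr rfl fun k _ => by ring
  · rw [← Finset.sum_neg_distrib]
    refine Finset.sum_congr rfl fun j _ => ?_
    rw [Finset.sum_mul, ← Finset.sum_neg_distrib]
    exact Finset.sum_congr rfl fun k _ => by ring

/-- If `w` solves the reduced multicomponent Smoluchowski equation on `(0,T)`
and the generating function `U(t,x) = ∑ₙ wₙ(t) e^{-n·x}` may be differentiated termwise,
then `U` solves `∂U/∂t = ½ (∇U)ᵀ A (∇U) + (∇U)ᵀ A m(0)` on `(0,T) × (0,∞)^m`. -/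
theorem gf_solves_hamilton_jacobi
    (m : ℕ) (hm : 1 ≤ m)
    (A : Matrix (Fin m) (Fin m) ℝ) (hAsymm : A.IsSymm) (hA0 : ∀ i j, 0 ≤ A i j)
    (T : ℝ) (hT : 0 < T) (m₀ : Fin m → ℝ)
    (w w' : (Fin m → ℕ) → ℝ → ℝ)
    (hderiv : ∀ n : Fin m → ℕ, ∀ t ∈ Set.Ioo (0:ℝ) T, HasDerivAt (w n) (w' n t) t)
    (hwpos : ∀ n : Fin m → ℕ, ∀ t ∈ Set.Ioo (0:ℝ) T, 0 ≤ w n t)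
    (hmoment : ∀ t ∈ Set.Ioo (0:ℝ) T,
      Summable (fun n : Fin m → ℕ => (∑ i, (n i : ℝ)) * w n t))
    -- `w` solves the reduced multicomponent Smoluchowski equation on (0,T)
    (hreduced : ∀ n : Fin m → ℕ, ∀ t ∈ Set.Ioo (0:ℝ) T,
      w' n t =
        (1/2) * ∑ k ∈ Finset.Iic n,
            (∑ i, ∑ j, (k i : ℝ) * A i j * ((n - k) j : ℝ)) * w k t * w (n - k) t
          - (∑ i, ∑ j, (n i : ℝ) * A i j * m₀ j) * w n t)
    -- absolute convergence of the series for U, its time derivative, and its gradient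
    (habs : ∀ t ∈ Set.Ioo (0:ℝ) T, ∀ x : Fin m → ℝ, (∀ i, 0 < x i) →
      Summable (fun n : Fin m → ℕ => |w n t * Real.exp (-∑ r, (n r : ℝ) * x r)|))
    (habs' : ∀ t ∈ Set.Ioo (0:ℝ) T, ∀ x : Fin m → ℝ, (∀ i, 0 < x i) →
      Summable (fun n : Fin m → ℕ => |w' n t * Real.exp (-∑ r, (n r : ℝ) * x r)|))
    (habs'' : ∀ t ∈ Set.Ioo (0:ℝ) T, ∀ x : Fin m → ℝ, (∀ i, 0 < x i) → ∀ j : Fin m,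
      Summable (fun n : Fin m → ℕ =>
        |(n j : ℝ) * w n t * Real.exp (-∑ r, (n r : ℝ) * x r)|))
    -- termwise differentiation in time is valid
    (hUt : ∀ t ∈ Set.Ioo (0:ℝ) T, ∀ x : Fin m → ℝ, (∀ i, 0 < x i) →
      HasDerivAt
        (fun s => ∑' n : Fin m → ℕ, w n s * Real.exp (-∑ r, (n r : ℝ) * x r))
        (∑' n : Fin m → ℕ, w' n t * Real.exp (-∑ r, (n r : ℝ) * x r)) t)
    -- the spatial gradient is given by the termwise-differentiated series
    (hUx : ∀ t ∈ Set.Ioo (0:ℝ) T, ∀ x : Fin m → ℝ, (∀ i, 0 < x i) → ∀ j : Fin m,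
      HasDerivAt
        (fun s => ∑' n : Fin m → ℕ, w n t *
          Real.exp (-∑ r, (n r : ℝ) * Function.update x j s r))
        (-∑' n : Fin m → ℕ, (n j : ℝ) * w n t * Real.exp (-∑ r, (n r : ℝ) * x r)) (x j)) :
    -- conclusion: ∂U/∂t = ½ (∇U)ᵀ A (∇U) + (∇U)ᵀ A m₀
    ∀ t ∈ Set.Ioo (0:ℝ) T, ∀ x : Fin m → ℝ, (∀ i, 0 < x i) →
      HasDerivAt
        (fun s => ∑' n : Fin m → ℕ, w n s * Real.exp (-∑ r, (n r : ℝ) * x r))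
        ((1/2) * ∑ j, ∑ k,
            (-∑' n : Fin m → ℕ, (n j : ℝ) * w n t * Real.exp (-∑ r, (n r : ℝ) * x r)) *
              A j k *
            (-∑' n : Fin m → ℕ, (n k : ℝ) * w n t * Real.exp (-∑ r, (n r : ℝ) * x r))
          + ∑ j, ∑ k,
            (-∑' n : Fin m → ℕ, (n j : ℝ) * w n t * Real.exp (-∑ r, (n r : ℝ) * x r)) *
              A j k * m₀ k) t := by
  intro t ht x hx
  have hfabs : ∀ i, Summable fun n : Fin m → ℕ =>
      |(n i : ℝ) * w n t * Real.exp (-∑ r, (n r : ℝ) * x r)| := habs'' t ht x hx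
  have hfs : ∀ i, Summable fun n : Fin m → ℕ =>
      (n i : ℝ) * w n t * Real.exp (-∑ r, (n r : ℝ) * x r) := fun i => (hfabs i).of_abs
  have hconv := fun p : Fin m × Fin m => gf_conv_aux _ _ (hfabs p.1) (hfabs p.2)
  have hEadd : ∀ n k : Fin m → ℕ, k ∈ Finset.Iic n →
      Real.exp (-∑ r, (k r : ℝ) * x r) * Real.exp (-∑ r, ((n - k) r : ℝ) * x r)
        = Real.exp (-∑ r, (n r : ℝ) * x r) := by
    intro n k hk
    rw [Finset.mem_Iic] at hk
    rw [← Real.exp_add]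
    congr 1
    rw [← neg_add, ← Finset.sum_add_distrib]
    congr 1
    refine Finset.sum_congr rfl fun r _ => ?_
    have h1 : k r ≤ n r := hk r
    have h2 : (k r : ℝ) + ((n - k) r : ℝ) = (n r : ℝ) := by
      simp only [Pi.sub_apply]
      rw [Nat.cast_sub h1]; ring
    rw [← add_mul, h2]
  have key' : ∀ n : Fin m → ℕ,
      w' n t * Real.exp (-∑ r, (n r : ℝ) * x r) =
      (1/2) * ∑ p : Fin m × Fin m, A p.1 p.2 *
          ∑ k ∈ Finset.Iic n,
            ((k p.1 : ℝ) * w k t * Real.exp (-∑ r, (k r : ℝ) * x r)) *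
            (((n - k) p.2 : ℝ) * w (n - k) t * Real.exp (-∑ r, ((n - k) r : ℝ) * x r))
        - ∑ i, (∑ j, A i j * m₀ j) *
            ((n i : ℝ) * w n t * Real.exp (-∑ r, (n r : ℝ) * x r)) := by
    intro n
    rw [hreduced n t ht, sub_mul, mul_assoc]
    congr 1
    · congr 1
      calc (∑ k ∈ Finset.Iic n,
              (∑ i, ∑ j, (k i : ℝ) * A i j * ((n - k) j : ℝ)) * w k t * w (n - k) t) *
            Real.exp (-∑ r, (n r : ℝ) * x r)
          = ∑ k ∈ Finset.Iic n, ∑ p : Fin m × Fin m, A p.1 p.2 *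
              (((k p.1 : ℝ) * w k t * Real.exp (-∑ r, (k r : ℝ) * x r)) *
               (((n - k) p.2 : ℝ) * w (n - k) t *
                 Real.exp (-∑ r, ((n - k) r : ℝ) * x r))) := by
            rw [Finset.sum_mul]
            refine Finset.sum_congr rfl fun k hk => ?_
            rw [← hEadd n k hk, ← Fintype.sum_prod_type', Finset.sum_mul, Finset.sum_mul,
              Finset.sum_mul]
            exact Finset.sum_congr rfl fun p _ => by ring
        _ = ∑ p : Fin m × Fin m, A p.1 p.2 *
              ∑ k ∈ Finset.Iic n,
                ((k p.1 : ℝ) * w k t * Real.exp (-∑ r, (k r : ℝ) * x r)) *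
                (((n - k) p.2 : ℝ) * w (n - k) t *
                  Real.exp (-∑ r, ((n - k) r : ℝ) * x r)) := by
            rw [Finset.sum_comm]
            exact Finset.sum_congr rfl fun p _ => (Finset.mul_sum _ _ _).symm
    · rw [Finset.sum_mul, Finset.sum_mul]
      refine Finset.sum_congr rfl fun i _ => ?_
      simp only [Finset.sum_mul]
      exact Finset.sum_congr rfl fun j _ => by ring
  have hsum1 : Summable fun n : Fin m → ℕ =>
      (1/2 : ℝ) * ∑ p : Fin m × Fin m, A p.1 p.2 *
          ∑ k ∈ Finset.Iic n,
            ((k p.1 : ℝ) * w k t * Real.exp (-∑ r, (k r : ℝ) * x r)) *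
            (((n - k) p.2 : ℝ) * w (n - k) t * Real.exp (-∑ r, ((n - k) r : ℝ) * x r)) :=
    (summable_sum fun p _ => ((hconv p).1.mul_left (A p.1 p.2))).mul_left _
  have hsum2 : Summable fun n : Fin m → ℕ =>
      ∑ i, (∑ j, A i j * m₀ j) * ((n i : ℝ) * w n t * Real.exp (-∑ r, (n r : ℝ) * x r)) :=
    summable_sum fun i _ => (hfs i).mul_left _
  have hD : (∑' n : Fin m → ℕ, w' n t * Real.exp (-∑ r, (n r : ℝ) * x r))
      = (1/2) * ∑ p : Fin m × Fin m, A p.1 p.2 *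
          ((∑' n : Fin m → ℕ, (n p.1 : ℝ) * w n t * Real.exp (-∑ r, (n r : ℝ) * x r)) *
           (∑' n : Fin m → ℕ, (n p.2 : ℝ) * w n t * Real.exp (-∑ r, (n r : ℝ) * x r)))
        - ∑ i, (∑ j, A i j * m₀ j) *
            (∑' n : Fin m → ℕ, (n i : ℝ) * w n t * Real.exp (-∑ r, (n r : ℝ) * x r)) := by
    rw [tsum_congr key', hsum1.tsum_sub hsum2, tsum_mul_left]
    congr 1
    · congr 1
      rw [Summable.tsum_finsetSum fun p _ => ((hconv p).1.mul_left (A p.1 p.2))]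
      exact Finset.sum_congr rfl fun p _ => by rw [tsum_mul_left, (hconv p).2]
    · rw [Summable.tsum_finsetSum fun i _ => (hfs i).mul_left _]
      exact Finset.sum_congr rfl fun i _ => by rw [tsum_mul_left]
  have h := hUt t ht x hx
  rw [hD] at h
  convert h using 1
  exact gf_final_alg A m₀
    (fun j => ∑' n : Fin m → ℕ, (n j : ℝ) * w n t * Real.exp (-∑ r, (n r : ℝ) * x r))
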